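/- Let G = PSL₂(q), where q ≡ 1 mod 4 and q = p^k for some k ≥ 1 and odd prime p, and let i ∈ G be an involution. Then the number of elements g ∈ G such that i·i^g has order p is at least |G|/q; that is, q times the cardinality of {g ∈ G : the order of i·i^g equals p} is at least the cardinality of G. -/

import Mathlib

/-- `PSL₂(F)`: the quotient of `SL₂(F)` by its center. -/
abbrev PSL2 (F : Type*) [Field F] : Type _ :=
  Matrix.SpecialLinearGroup (Fin 2) F ⧸
    Subgroup.center (Matrix.SpecialLinearGroup (Fin 2) F)

section Aux

open Matrix

abbrev SL2' (F : Type*) [Field F] := Matrix.SpecialLinearGroup (Fin 2) F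

variable {F : Type*} [Field F]

/-- upper unipotent -/
def uu (b : F) : SL2' F := ⟨!![1, b; 0, 1], by simp [Matrix.det_fin_two_of]⟩

lemma uu_mul (b c : F) : uu b * uu c = uu (b + c) := by
  apply Subtype.ext
  show (uu b).val * (uu c).val = _
  simp [uu, Matrix.mul_fin_two]
  ring_nf

lemma uu_pow (b : F) (n : ℕ) : (uu b) ^ n = uu (n * b) := by
  induction n with
  | zero =>
    simp only [pow_zero, Nat.cast_zero, zero_mul]
    apply Subtype.ext
    show (1 : Matrix (Fin 2) (Fin 2) F) = _
    simp [uu, Matrix.one_fin_two]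
  | succ n ih =>
    rw [pow_succ, ih, uu_mul]
    push_cast
    ring_nf

/-- -1 as element of SL2 -/
def negI : SL2' F := ⟨!![-1, 0; 0, -1], by simp [Matrix.det_fin_two_of]⟩

lemma negI_mem_center : (negI : SL2' F) ∈ Subgroup.center (SL2' F) := by
  rw [Matrix.SpecialLinearGroup.mem_center_iff]
  refine ⟨-1, by simp, ?_⟩
  show (Matrix.scalar (Fin 2)) (-1) = (negI (F := F)).val
  ext i j
  fin_cases i <;> fin_cases j <;> simp [negI, Matrix.scalar_apply]

lemma uu_not_mem_center {b : F} (hb : b ≠ 0) :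
    (uu b : SL2' F) ∉ Subgroup.center (SL2' F) := by
  rw [Matrix.SpecialLinearGroup.mem_center_iff]
  rintro ⟨r, -, hr⟩
  have := congr_fun (congr_fun hr 0) 1
  simp [uu, Matrix.scalar_apply, Matrix.diagonal_apply] at this
  exact hb this.symm

lemma orderOf_mk_uu {p : ℕ} (hp : p.Prime) (hpF : (p : F) = 0) {b : F} (hb : b ≠ 0) :
    orderOf (QuotientGroup.mk (s := Subgroup.center (SL2' F)) (uu b)) = p := by
  haveI : Fact p.Prime := ⟨hp⟩
  apply orderOf_eq_prime
  · rw [← QuotientGroup.mk_pow, uu_pow, hpF, zero_mul]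
    rw [QuotientGroup.eq_one_iff]
    have : (uu (0:F)) = 1 := by
      apply Subtype.ext
      show _ = (1 : Matrix (Fin 2) (Fin 2) F)
      simp [uu, Matrix.one_fin_two]
    rw [this]; exact Subgroup.one_mem _
  · rw [Ne, QuotientGroup.eq_one_iff]
    exact uu_not_mem_center hb

lemma mk_negI_mul (x : SL2' F) :
    QuotientGroup.mk (s := Subgroup.center (SL2' F)) (negI * x)
      = QuotientGroup.mk (s := Subgroup.center (SL2' F)) x := by
  rw [QuotientGroup.mk_mul, (QuotientGroup.eq_one_iff _).mpr negI_mem_center, one_mul]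

lemma card_SL2_le [Fintype F] :
    Nat.card (SL2' F) ≤ Fintype.card F ^ 3 + Fintype.card F ^ 2 := by
  classical
  set f : SL2' F → (F × F × F) ⊕ (F × F) := fun g =>
    if g.val 0 1 ≠ 0 then Sum.inl (g.val 0 0, g.val 0 1, g.val 1 1)
    else Sum.inr (g.val 0 0, g.val 1 0)
  have hf : Function.Injective f := by
    intro a b hab
    have hda : a.val 0 0 * a.val 1 1 - a.val 0 1 * a.val 1 0 = 1 := by
      rw [← Matrix.det_fin_two]; exact a.prop
    have hdb : b.val 0 0 * b.val 1 1 - b.val 0 1 * b.val 1 0 = 1 := by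
      rw [← Matrix.det_fin_two]; exact b.prop
    apply Subtype.ext
    simp only [f] at hab
    by_cases ha : a.val 0 1 ≠ 0 <;> by_cases hb : b.val 0 1 ≠ 0
    · rw [if_pos ha, if_pos hb] at hab
      simp only [Sum.inl.injEq, Prod.mk.injEq] at hab
      obtain ⟨h1, h2, h3⟩ := hab
      rw [Matrix.eta_fin_two a.val, Matrix.eta_fin_two b.val]
      have h4 : a.val 1 0 = b.val 1 0 := by
        have : a.val 0 1 * a.val 1 0 = b.val 0 1 * b.val 1 0 := by
          rw [← sub_eq_zero]; rw [← sub_eq_zero] at hda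
          linear_combination -hda + hdb + a.val 1 1 * h1 + b.val 0 0 * h3
        rw [← h2] at this
        exact mul_left_cancel₀ ha this
      rw [h1, h2, h3, h4]
    · rw [if_pos ha, if_neg hb] at hab; exact absurd hab (by simp)
    · rw [if_neg ha, if_pos hb] at hab; exact absurd hab (by simp)
    · push_neg at ha hb
      rw [if_neg (by simpa using ha), if_neg (by simpa using hb)] at hab
      simp only [Sum.inr.injEq, Prod.mk.injEq] at hab
      obtain ⟨h1, h2⟩ := hab
      rw [Matrix.eta_fin_two a.val, Matrix.eta_fin_two b.val, ha, hb, h1, h2]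
      have ha0 : a.val 0 0 ≠ 0 := by
        intro h; rw [h, ha] at hda; simp at hda
      have : a.val 1 1 = b.val 1 1 := by
        rw [ha] at hda; rw [hb] at hdb
        have : a.val 0 0 * a.val 1 1 = b.val 0 0 * b.val 1 1 := by
          linear_combination hda - hdb
        rw [← h1] at this
        exact mul_left_cancel₀ ha0 this
      rw [this]
  calc Nat.card (SL2' F) ≤ Nat.card ((F × F × F) ⊕ (F × F)) :=
        Nat.card_le_card_of_injective f hf
    _ = Fintype.card F ^ 3 + Fintype.card F ^ 2 := by
        simp [Nat.card_eq_fintype_card, Fintype.card_sum, Fintype.card_prod]; ring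

lemma normalize_conj (a : F) (M : Matrix (Fin 2) (Fin 2) F) (hd : M.det ≠ 0) (w : SL2' F)
    (hc : w.val * M = M * !![a, 0; 0, -a]) :
    ∃ H : SL2' F, w.val * H.val = H.val * !![a, 0; 0, -a] := by
  refine ⟨⟨M * !![(M.det)⁻¹, 0; 0, 1], ?_⟩, ?_⟩
  · rw [Matrix.det_mul, Matrix.det_fin_two_of]
    field_simp
    simp
  · show w.val * (M * _) = (M * _) * _
    rw [← mul_assoc, hc, mul_assoc, mul_assoc]
    congr 1
    ext i j
    fin_cases i <;> fin_cases j <;>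
      simp [Matrix.mul_apply, Fin.sum_univ_two] <;> ring

lemma exists_conj_diag (w : SL2' F) (hw2 : w.val * w.val = (-1 : Matrix (Fin 2) (Fin 2) F))
    (hsq : ∃ b : F, b * b = -1) (h2 : (2 : F) ≠ 0) :
    ∃ (a : F) (H : SL2' F), a * a = -1 ∧ w.val * H.val = H.val * !![a, 0; 0, -a] := by
  set α := w.val 0 0 with hα
  set β := w.val 0 1 with hβ
  set γ := w.val 1 0 with hγ
  set δ := w.val 1 1 with hδ'
  have hdet : α * δ - β * γ = 1 := by rw [← Matrix.det_fin_two]; exact w.prop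
  have e1 : α * α + β * γ = -1 := by
    have := congr_fun (congr_fun hw2 0) 0
    simpa [Matrix.mul_apply, Fin.sum_univ_two] using this
  have e2 : α * β + β * δ = 0 := by
    have := congr_fun (congr_fun hw2 0) 1
    simpa [Matrix.mul_apply, Fin.sum_univ_two, mul_comm] using this
  have hδ : δ = -α := by
    by_cases hs : α + δ = 0
    · linear_combination hs
    · exfalso
      have hb0 : β = 0 := by
        rcases mul_eq_zero.mp (show β * (α + δ) = 0 by linear_combination e2) with h | h
        · exact h
        · exact absurd h hs
      have : α * (α + δ) = 0 := by
        rw [hb0] at e1 hdet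
        linear_combination e1 + hdet
      rcases mul_eq_zero.mp this with h | h
      · rw [hb0, h] at e1
        exact one_ne_zero (show (1:F) = 0 by linear_combination e1)
      · exact hs h
  have hW : w.val = !![α, β; γ, -α] := by
    rw [← hδ]
    exact Matrix.eta_fin_two w.val
  by_cases hb : β = 0
  · have ha : α * α = -1 := by rw [hb] at e1; linear_combination e1
    have hα0 : α ≠ 0 := fun h => one_ne_zero (show (1:F) = 0 by
      rw [h] at ha; linear_combination ha)
    have hdM : (!![2*α, 0; γ, 1] : Matrix (Fin 2) (Fin 2) F).det ≠ 0 := by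
      rw [Matrix.det_fin_two_of]
      simpa using mul_ne_zero h2 hα0
    have hc : w.val * !![2*α, 0; γ, 1] = !![2*α, 0; γ, 1] * !![α, 0; 0, -α] := by
      rw [hW]
      ext i j
      fin_cases i <;> fin_cases j
      · simp [Matrix.mul_apply, Fin.sum_univ_two, hb]; ring
      · simp [Matrix.mul_apply, Fin.sum_univ_two, hb]
      · simp [Matrix.mul_apply, Fin.sum_univ_two]; ring
      · simp [Matrix.mul_apply, Fin.sum_univ_two]
    obtain ⟨H, hH⟩ := normalize_conj α _ hdM w hc
    exact ⟨α, H, ha, hH⟩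
  · obtain ⟨a, ha⟩ := hsq
    have ha0 : a ≠ 0 := fun h => one_ne_zero (show (1:F) = 0 by
      rw [h] at ha; linear_combination ha)
    have hdM : (!![β, β; a - α, -a - α] : Matrix (Fin 2) (Fin 2) F).det ≠ 0 := by
      rw [Matrix.det_fin_two_of]
      intro h
      exact mul_ne_zero (mul_ne_zero (neg_ne_zero.mpr h2) hb) ha0 (by linear_combination h)
    have hc : w.val * !![β, β; a - α, -a - α]
        = !![β, β; a - α, -a - α] * !![a, 0; 0, -a] := by
      rw [hW]
      ext i j
      fin_cases i <;> fin_cases j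
      · simp [Matrix.mul_apply, Fin.sum_univ_two]; ring
      · simp [Matrix.mul_apply, Fin.sum_univ_two]; ring
      · simp [Matrix.mul_apply, Fin.sum_univ_two]; linear_combination e1 - ha
      · simp [Matrix.mul_apply, Fin.sum_univ_two]; linear_combination e1 - ha
    obtain ⟨H, hH⟩ := normalize_conj a _ hdM w hc
    exact ⟨a, H, ha, hH⟩

def dsl (a : F) (ha : a * a = -1) : SL2' F :=
  ⟨!![a, 0; 0, -a], by rw [Matrix.det_fin_two_of]; linear_combination -ha⟩

def tup (x y : F) (hx : x ≠ 0) : SL2' F :=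
  ⟨!![x, y; 0, x⁻¹], by rw [Matrix.det_fin_two_of]; field_simp; simp⟩

def tlo (x z : F) (hx : x ≠ 0) : SL2' F :=
  ⟨!![x, 0; z, x⁻¹], by rw [Matrix.det_fin_two_of]; field_simp; simp⟩

lemma tup_inv (x y : F) (hx : x ≠ 0) :
    (tup x y hx)⁻¹ = (⟨!![x⁻¹, -y; 0, x], by rw [Matrix.det_fin_two_of]; field_simp; simp⟩ : SL2' F) := by
  apply inv_eq_of_mul_eq_one_right
  apply Subtype.ext
  show (tup x y hx).val * _ = (1 : Matrix (Fin 2) (Fin 2) F)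
  ext i j
  fin_cases i <;> fin_cases j <;>
    simp [tup, Matrix.mul_apply, Fin.sum_univ_two, Matrix.one_apply, hx] <;> ring

lemma tlo_inv (x z : F) (hx : x ≠ 0) :
    (tlo x z hx)⁻¹ = (⟨!![x⁻¹, 0; -z, x], by rw [Matrix.det_fin_two_of]; field_simp; simp⟩ : SL2' F) := by
  apply inv_eq_of_mul_eq_one_right
  apply Subtype.ext
  show (tlo x z hx).val * _ = (1 : Matrix (Fin 2) (Fin 2) F)
  ext i j
  fin_cases i <;> fin_cases j <;>
    simp [tlo, Matrix.mul_apply, Fin.sum_univ_two, Matrix.one_apply, hx] <;> ring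

def ll (c : F) : SL2' F := ⟨!![1, 0; c, 1], by simp [Matrix.det_fin_two_of]⟩

lemma ll_mul (b c : F) : ll b * ll c = ll (b + c) := by
  apply Subtype.ext
  show (ll b).val * (ll c).val = _
  simp [ll, Matrix.mul_fin_two]

lemma ll_pow (b : F) (n : ℕ) : (ll b) ^ n = ll (n * b) := by
  induction n with
  | zero =>
    simp only [pow_zero, Nat.cast_zero, zero_mul]
    apply Subtype.ext
    show (1 : Matrix (Fin 2) (Fin 2) F) = _
    simp [ll, Matrix.one_fin_two]
  | succ n ih =>
    rw [pow_succ, ih, ll_mul]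
    push_cast
    ring_nf

lemma ll_not_mem_center {b : F} (hb : b ≠ 0) :
    (ll b : SL2' F) ∉ Subgroup.center (SL2' F) := by
  rw [Matrix.SpecialLinearGroup.mem_center_iff]
  rintro ⟨r, -, hr⟩
  have := congr_fun (congr_fun hr 1) 0
  simp [ll, Matrix.scalar_apply, Matrix.diagonal_apply] at this
  exact hb this.symm

lemma orderOf_mk_ll {p : ℕ} (hp : p.Prime) (hpF : (p : F) = 0) {b : F} (hb : b ≠ 0) :
    orderOf (QuotientGroup.mk (s := Subgroup.center (SL2' F)) (ll b)) = p := by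
  haveI : Fact p.Prime := ⟨hp⟩
  apply orderOf_eq_prime
  · rw [← QuotientGroup.mk_pow, ll_pow, hpF, zero_mul]
    rw [QuotientGroup.eq_one_iff]
    have : (ll (0:F)) = 1 := by
      apply Subtype.ext
      show _ = (1 : Matrix (Fin 2) (Fin 2) F)
      simp [ll, Matrix.one_fin_two]
    rw [this]; exact Subgroup.one_mem _
  · rw [Ne, QuotientGroup.eq_one_iff]
    exact ll_not_mem_center hb

lemma tup_calc (a x y : F) (ha : a * a = -1) (hx : x ≠ 0) :
    dsl a ha * (tup x y hx)⁻¹ * dsl a ha * tup x y hx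
      = negI * uu (x⁻¹ * y + y * x⁻¹) := by
  rw [tup_inv]
  apply Subtype.ext
  show (dsl a ha).val * _ * (dsl a ha).val * (tup x y hx).val = (negI (F := F)).val * _
  ext i j
  fin_cases i <;> fin_cases j <;>
    simp [dsl, tup, uu, negI, Matrix.mul_apply, Fin.sum_univ_two] <;>
    first
      | linear_combination (2 * x⁻¹ * y) * ha
      | linear_combination (x⁻¹ * x) * ha - inv_mul_cancel₀ hx
      | linear_combination (x * x⁻¹) * ha - mul_inv_cancel₀ hx
      | ring

lemma tlo_calc (a x z : F) (ha : a * a = -1) (hx : x ≠ 0) :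
    dsl a ha * (tlo x z hx)⁻¹ * dsl a ha * tlo x z hx
      = negI * ll (z * x + x * z) := by
  rw [tlo_inv]
  apply Subtype.ext
  show (dsl a ha).val * _ * (dsl a ha).val * (tlo x z hx).val = (negI (F := F)).val * _
  ext i j
  fin_cases i <;> fin_cases j <;>
    simp [dsl, tlo, ll, negI, Matrix.mul_apply, Fin.sum_univ_two] <;>
    first
      | linear_combination (z * x + x * z) * ha
      | linear_combination (-(z * x) - x * z) * ha
      | linear_combination (x⁻¹ * x) * ha - inv_mul_cancel₀ hx
      | linear_combination (x * x⁻¹) * ha - mul_inv_cancel₀ hx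
      | ring

lemma sq_eq_negOne (w : SL2' F) (h2 : (2:F) ≠ 0)
    (hord : orderOf (QuotientGroup.mk (s := Subgroup.center (SL2' F)) w) = 2) :
    w.val * w.val = (-1 : Matrix (Fin 2) (Fin 2) F) := by
  have hne1 : QuotientGroup.mk (s := Subgroup.center (SL2' F)) w ≠ 1 := by
    intro h
    rw [h, orderOf_one] at hord
    omega
  have hmem : w ^ 2 ∈ Subgroup.center (SL2' F) := by
    rw [← QuotientGroup.eq_one_iff, QuotientGroup.mk_pow, ← orderOf_dvd_iff_pow_eq_one, hord]
  obtain ⟨r, hr2, hr⟩ := Matrix.SpecialLinearGroup.mem_center_iff.mp hmem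
  rw [Fintype.card_fin] at hr2
  have hww : w.val * w.val = Matrix.scalar (Fin 2) r := by
    rw [hr, pow_two]; rfl
  rcases mul_eq_zero.mp (show (r - 1) * (r + 1) = 0 by linear_combination hr2) with h | h
  · -- r = 1 : contradiction
    exfalso
    have hr1 : r = 1 := by linear_combination h
    rw [hr1] at hww
    have hsq : w.val * w.val = 1 := by
      rw [hww]; ext i j; simp [Matrix.scalar_apply, Matrix.one_apply, Matrix.diagonal_apply]
    set α := w.val 0 0 with hα
    set β := w.val 0 1 with hβ
    set γ := w.val 1 0 with hγ
    set δ := w.val 1 1 with hδ'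
    have hdet : α * δ - β * γ = 1 := by rw [← Matrix.det_fin_two]; exact w.prop
    have e1 : α * α + β * γ = 1 := by
      have := congr_fun (congr_fun hsq 0) 0
      simpa [Matrix.mul_apply, Fin.sum_univ_two, Matrix.one_apply] using this
    have e2 : α * β + β * δ = 0 := by
      have := congr_fun (congr_fun hsq 0) 1
      simpa [Matrix.mul_apply, Fin.sum_univ_two, Matrix.one_apply, mul_comm] using this
    have e3 : γ * α + δ * γ = 0 := by
      have := congr_fun (congr_fun hsq 1) 0
      simpa [Matrix.mul_apply, Fin.sum_univ_two, Matrix.one_apply, mul_comm] using this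
    have hs : α + δ ≠ 0 := by
      intro h
      have hδα : δ = -α := by linear_combination h
      rw [hδα] at hdet
      exact h2 (by linear_combination -hdet - e1)
    have hb0 : β = 0 := by
      rcases mul_eq_zero.mp (show β * (α + δ) = 0 by linear_combination e2) with h | h
      · exact h
      · exact absurd h hs
    have hc0 : γ = 0 := by
      rcases mul_eq_zero.mp (show γ * (α + δ) = 0 by linear_combination e3) with h | h
      · exact h
      · exact absurd h hs
    have ha1 : α * α = 1 := by rw [hb0] at e1; linear_combination e1
    have hδα : δ = α := by
      rw [hb0] at hdet
      have hα0 : α ≠ 0 := fun h => one_ne_zero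
        (show (1:F) = 0 by rw [h] at ha1; linear_combination -ha1)
      have : α * δ = α * α := by linear_combination hdet - ha1
      exact mul_left_cancel₀ hα0 this
    apply hne1
    rw [QuotientGroup.eq_one_iff]
    rw [Matrix.SpecialLinearGroup.mem_center_iff]
    refine ⟨α, by rw [Fintype.card_fin]; linear_combination ha1, ?_⟩
    show _ = w.val
    rw [Matrix.eta_fin_two w.val, ← hα, ← hβ, ← hγ, ← hδ', hb0, hc0, hδα]
    ext i j
    fin_cases i <;> fin_cases j <;> simp [Matrix.scalar_apply, Matrix.diagonal_apply]
  · have hr1 : r = -1 := by linear_combination h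
    rw [hr1] at hww
    rw [hww]
    ext i j
    fin_cases i <;> fin_cases j <;>
      simp [Matrix.scalar_apply, Matrix.diagonal_apply, Matrix.one_apply]

end Aux

/-- Let `G = PSL₂(q)`, `q ≡ 1 mod 4`, `q = p^k`, `p` an odd prime,
`k ≥ 1`, and let `i ∈ G` be an involution.  Then the number of `g ∈ G` such that
`i·i^g` has order `p` is at least `|G|/q`, i.e. `q` times the number of such `g` is at
least `|G|`. -/
theorem proportion_unipotent_product (p k q : ℕ) (hp : p.Prime) (hpodd : Odd p)
    (hk : 1 ≤ k) (hq : q = p ^ k) (hq4 : q % 4 = 1)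
    (F : Type*) [Field F] [Fintype F] (hF : Fintype.card F = q)
    (i : PSL2 F) (hi : orderOf i = 2) :
    Nat.card (PSL2 F) ≤
      q * Set.ncard {g : PSL2 F | orderOf (i * (g⁻¹ * i * g)) = p} := by
  classical
  have hq5 : 5 ≤ q := by
    have hp3 : 3 ≤ p := by
      rcases hpodd with ⟨m, hm⟩
      have := hp.two_le
      omega
    have : p ≤ p ^ k := Nat.le_self_pow (by omega) p
    have hq3 : 3 ≤ q := by omega
    omega
  have hqF : (q : F) = 0 := by rw [← hF]; exact Nat.cast_card_eq_zero F
  have hpF : (p : F) = 0 := by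
    rw [hq] at hqF; push_cast at hqF
    exact pow_eq_zero_iff (by omega) |>.mp hqF
  have h2 : (2 : F) ≠ 0 := by
    intro h
    rcases hpodd with ⟨m, hm⟩
    have h1 : (p : F) = 1 := by rw [hm]; push_cast; rw [h]; ring
    exact one_ne_zero (h1.symm.trans hpF)
  have hsq : ∃ b : F, b * b = -1 := by
    obtain ⟨b, hb⟩ := (FiniteField.isSquare_neg_one_iff (F := F)).mpr (by rw [hF]; omega)
    exact ⟨b, hb.symm⟩
  obtain ⟨w, rfl⟩ := QuotientGroup.mk_surjective i
  have hw2 := sq_eq_negOne w h2 hi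
  obtain ⟨a, H, ha, hcomm⟩ := exists_conj_diag w hw2 hsq h2
  have hcommSL : w * H = H * dsl a ha := by
    apply Subtype.ext
    show w.val * H.val = H.val * (dsl a ha).val
    exact hcomm
  have hw : w = H * dsl a ha * H⁻¹ := by rw [← hcommSL]; group
  -- the injective family
  let ρ : (Fˣ × Fˣ) ⊕ (Fˣ × Fˣ) → SL2' F := fun u =>
    match u with
    | Sum.inl (x, y) => H * tup (x : F) (y : F) x.ne_zero * H⁻¹
    | Sum.inr (x, z) => H * tlo (x : F) (z : F) x.ne_zero * H⁻¹
  have hρ : Function.Injective ρ := by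
    intro u v huv
    have huv' : ∀ (s t : SL2' F), H * s * H⁻¹ = H * t * H⁻¹ → s = t := by
      intro s t hst
      have h1 : H * s = H * t := mul_right_cancel hst
      exact mul_left_cancel h1
    match u, v with
    | Sum.inl (x, y), Sum.inl (x', y') =>
      have h := congrArg Subtype.val (huv' _ _ huv)
      have h00 := congr_fun (congr_fun h 0) 0
      have h01 := congr_fun (congr_fun h 0) 1
      simp [tup] at h00 h01
      simp only [Sum.inl.injEq, Prod.mk.injEq]
      exact ⟨Units.ext h00, Units.ext h01⟩
    | Sum.inl (x, y), Sum.inr (x', z') =>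
      exfalso
      have h := congrArg Subtype.val (huv' _ _ huv)
      have h01 := congr_fun (congr_fun h 0) 1
      simp [tup, tlo] at h01
    | Sum.inr (x, z), Sum.inl (x', y') =>
      exfalso
      have h := congrArg Subtype.val (huv' _ _ huv)
      have h01 := congr_fun (congr_fun h 0) 1
      simp [tup, tlo] at h01
      exact y'.ne_zero h01.symm
    | Sum.inr (x, z), Sum.inr (x', z') =>
      have h := congrArg Subtype.val (huv' _ _ huv)
      have h00 := congr_fun (congr_fun h 0) 0
      have h10 := congr_fun (congr_fun h 1) 0
      simp [tlo] at h00 h10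
      simp only [Sum.inr.injEq, Prod.mk.injEq]
      exact ⟨Units.ext h00, Units.ext h10⟩
  -- each element lands in the good set
  set good : Set (PSL2 F) :=
    {g : PSL2 F | orderOf ((QuotientGroup.mk w : PSL2 F) * (g⁻¹ * QuotientGroup.mk w * g)) = p}
    with hgood
  have key : ∀ u, (QuotientGroup.mk (ρ u) : PSL2 F) ∈ good := by
    intro u
    have conj_eq : ∀ (t : SL2' F),
        w * (H * t * H⁻¹)⁻¹ * w * (H * t * H⁻¹)
          = H * (dsl a ha * t⁻¹ * dsl a ha * t) * H⁻¹ := by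
      intro t
      rw [hw]
      group
    have main : ∀ (t : SL2' F) (e : F), dsl a ha * t⁻¹ * dsl a ha * t = negI * uu e → e ≠ 0 →
        orderOf ((QuotientGroup.mk w : PSL2 F)
            * ((QuotientGroup.mk (H * t * H⁻¹) : PSL2 F))⁻¹
            * (QuotientGroup.mk w : PSL2 F) * (QuotientGroup.mk (H * t * H⁻¹) : PSL2 F)) = p := by
      intro t e hcalc he
      have : (QuotientGroup.mk w : PSL2 F)
            * ((QuotientGroup.mk (H * t * H⁻¹) : PSL2 F))⁻¹
            * (QuotientGroup.mk w : PSL2 F) * (QuotientGroup.mk (H * t * H⁻¹) : PSL2 F)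
          = QuotientGroup.mk (w * (H * t * H⁻¹)⁻¹ * w * (H * t * H⁻¹)) := by
        simp [QuotientGroup.mk_mul, QuotientGroup.mk_inv]
      rw [this, conj_eq t, hcalc]
      have hconj : (QuotientGroup.mk (H * (negI * uu e) * H⁻¹) : PSL2 F)
          = (MulAut.conj (QuotientGroup.mk H : PSL2 F)) (QuotientGroup.mk (negI * uu e)) := by
        simp [MulAut.conj_apply, QuotientGroup.mk_mul, QuotientGroup.mk_inv]
      rw [hconj, MulEquiv.orderOf_eq, mk_negI_mul]
      exact orderOf_mk_uu hp hpF he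
    have main' : ∀ (t : SL2' F) (e : F), dsl a ha * t⁻¹ * dsl a ha * t = negI * ll e → e ≠ 0 →
        orderOf ((QuotientGroup.mk w : PSL2 F)
            * ((QuotientGroup.mk (H * t * H⁻¹) : PSL2 F))⁻¹
            * (QuotientGroup.mk w : PSL2 F) * (QuotientGroup.mk (H * t * H⁻¹) : PSL2 F)) = p := by
      intro t e hcalc he
      have : (QuotientGroup.mk w : PSL2 F)
            * ((QuotientGroup.mk (H * t * H⁻¹) : PSL2 F))⁻¹
            * (QuotientGroup.mk w : PSL2 F) * (QuotientGroup.mk (H * t * H⁻¹) : PSL2 F)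
          = QuotientGroup.mk (w * (H * t * H⁻¹)⁻¹ * w * (H * t * H⁻¹)) := by
        simp [QuotientGroup.mk_mul, QuotientGroup.mk_inv]
      rw [this, conj_eq t, hcalc]
      have hconj : (QuotientGroup.mk (H * (negI * ll e) * H⁻¹) : PSL2 F)
          = (MulAut.conj (QuotientGroup.mk H : PSL2 F)) (QuotientGroup.mk (negI * ll e)) := by
        simp [MulAut.conj_apply, QuotientGroup.mk_mul, QuotientGroup.mk_inv]
      rw [hconj, MulEquiv.orderOf_eq, mk_negI_mul]
      exact orderOf_mk_ll hp hpF he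
    have assoc_eq : ∀ g : PSL2 F,
        (QuotientGroup.mk w : PSL2 F) * (g⁻¹ * QuotientGroup.mk w * g)
          = (QuotientGroup.mk w : PSL2 F) * g⁻¹ * QuotientGroup.mk w * g := by
      intro g; group
    match u with
    | Sum.inl (x, y) =>
      show orderOf _ = p
      rw [assoc_eq]
      refine main (tup (x : F) (y : F) x.ne_zero) ((x : F)⁻¹ * y + y * (x : F)⁻¹)
        (tup_calc a x y ha x.ne_zero) ?_
      have : (x : F)⁻¹ * y + y * (x : F)⁻¹ = 2 * ((x : F)⁻¹ * y) := by ring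
      rw [this]
      exact mul_ne_zero h2 (mul_ne_zero (inv_ne_zero x.ne_zero) y.ne_zero)
    | Sum.inr (x, z) =>
      show orderOf _ = p
      rw [assoc_eq]
      refine main' (tlo (x : F) (z : F) x.ne_zero) ((z : F) * x + x * z)
        (tlo_calc a x z ha x.ne_zero) ?_
      have : (z : F) * x + (x : F) * z = 2 * ((x : F) * z) := by ring
      rw [this]
      exact mul_ne_zero h2 (mul_ne_zero x.ne_zero z.ne_zero)
  -- counting
  haveI : Finite (PSL2 F) := Quotient.finite _
  set c := Nat.card (Subgroup.center (SL2' F)) with hc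
  have hcpos : 0 < c := Nat.card_pos
  have hfull : Nat.card (SL2' F) = Nat.card (PSL2 F) * c :=
    Subgroup.card_eq_card_quotient_mul_card_subgroup _
  have hSL : Nat.card (SL2' F) ≤ q ^ 3 + q ^ 2 := by rw [← hF]; exact card_SL2_le
  set Y : Set (PSL2 F) := (QuotientGroup.mk : SL2' F → PSL2 F) '' (Set.range ρ) with hY
  have hYsub : Y ⊆ good := by
    rintro _ ⟨_, ⟨u, rfl⟩, rfl⟩
    exact key u
  have hP : Nat.card ((QuotientGroup.mk : SL2' F → PSL2 F) ⁻¹' Y)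
      = c * Nat.card Y := by
    rw [Nat.card_congr (QuotientGroup.preimageMkEquivSubgroupProdSet
      (Subgroup.center (SL2' F)) Y), Nat.card_prod]
  have hSsub : Set.range ρ ⊆ (QuotientGroup.mk : SL2' F → PSL2 F) ⁻¹' Y :=
    Set.subset_preimage_image _ _
  have hrange : Nat.card (Set.range ρ) = 2 * (q - 1) ^ 2 := by
    rw [Nat.card_range_of_injective hρ, Nat.card_sum]
    simp only [Nat.card_prod, Nat.card_eq_fintype_card, Fintype.card_prod,
      Fintype.card_units, hF]
    ring
  have hrange_le : Nat.card (Set.range ρ)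
      ≤ Nat.card ((QuotientGroup.mk : SL2' F → PSL2 F) ⁻¹' Y) := by
    rw [Nat.card_coe_set_eq, Nat.card_coe_set_eq]
    exact Set.ncard_le_ncard hSsub (Set.toFinite _)
  have hYgood : Nat.card Y ≤ Set.ncard good := by
    rw [Nat.card_coe_set_eq]
    exact Set.ncard_le_ncard hYsub (Set.toFinite _)
  have harith : q ^ 3 + q ^ 2 ≤ q * (2 * (q - 1) ^ 2) := by
    obtain ⟨r, rfl⟩ := Nat.exists_eq_add_of_le hq5
    have h41 : 5 + r - 1 = r + 4 := by omega
    rw [h41]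
    nlinarith [sq_nonneg r]
  have chain : Nat.card (PSL2 F) * c ≤ (q * Set.ncard good) * c := by
    calc Nat.card (PSL2 F) * c = Nat.card (SL2' F) := hfull.symm
      _ ≤ q ^ 3 + q ^ 2 := hSL
      _ ≤ q * (2 * (q - 1) ^ 2) := harith
      _ = q * Nat.card (Set.range ρ) := by rw [hrange]
      _ ≤ q * (c * Nat.card Y) := by
          rw [← hP]; exact Nat.mul_le_mul_left q hrange_le
      _ ≤ q * (c * Set.ncard good) := by
          exact Nat.mul_le_mul_left q (Nat.mul_le_mul_left c hYgood)
      _ = (q * Set.ncard good) * c := by ring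
  exact Nat.le_of_mul_le_mul_right chain hcpos
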